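/- The coproduct Δ(M) = Σ_{A ⊆ E} M|_A ⊗ M/A on the vector space spanned by isomorphism classes of matroids is coassociative. -/

import Mathlib

open Matroid Set Finset

variable {α : Type*}

/-- Deletion `M \ D`: restriction of `M` to `M.E \ D`. -/
def mDelete (M : Matroid α) (D : Set α) : Matroid α := M ↾ (M.E \ D)

/-- Contraction `M / C := (M* \ C)*`. -/
def mContract (M : Matroid α) (C : Set α) : Matroid α := (mDelete M✶ C)✶

/-- Rank of a subset: maximal cardinality of an independent subset. -/
noncomputable def mRk (M : Matroid α) (A : Set α) : ℕ :=
  sSup {n : ℕ | ∃ I, M.Indep I ∧ I ⊆ A ∧ I.ncard = n}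

/-- Rank of a matroid. -/
noncomputable def mRank (M : Matroid α) : ℕ := mRk M M.E

/-- Nullity of a matroid. -/
noncomputable def mNullity (M : Matroid α) : ℕ := M.E.ncard - mRank M

/-- `e` is a loop: `{e}` is a circuit, i.e. `e` is in the ground set and `{e}` is dependent. -/
def mIsLoop (M : Matroid α) (e : α) : Prop := e ∈ M.E ∧ ¬ M.Indep {e}

/-- `e` is a coloop: `e` lies in every basis. -/
def mIsColoop (M : Matroid α) (e : α) : Prop := ∀ B, M.IsBase B → e ∈ B

/-- The Tutte polynomial `T_M(x,y) = Σ_{A ⊆ E} (x-1)^(r(E)-r(A)) (y-1)^(|A|-r(A))`. -/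
noncomputable def mTutte {R : Type*} [CommRing R] (M : Matroid α) (x y : R) : R :=
  letI := Classical.propDecidable M.E.Finite
  if hE : M.E.Finite then
    ∑ A ∈ hE.toFinset.powerset,
      (x - 1) ^ (mRk M M.E - mRk M (A : Set α)) * (y - 1) ^ (A.card - mRk M (A : Set α))
  else 0


/-- Isomorphism of matroids (on the same type): `N` is the image of `M` under an
injective-on-ground-set map. Taking `Quot` of this relation gives isomorphism classes. -/
def MatIso {β : Type*} (M N : Matroid β) : Prop :=
  ∃ (f : β → β) (hf : Set.InjOn f M.E), M.map f hf = N

lemma mContract_ground (M : Matroid α) (C : Set α) : (mContract M C).E = M.E \ C := rfl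

lemma mContract_indep_iff {M : Matroid α} {C I : Set α} (hC : C ⊆ M.E) :
    (mContract M C).Indep I ↔ I ⊆ M.E \ C ∧ ∃ J, M.IsBasis J C ∧ M.Indep (I ∪ J) := by
  have hsub : M.E \ C ⊆ M✶.E := diff_subset
  rw [mContract, mDelete, dual_ground, dual_indep_iff_exists']
  simp only [restrict_ground_eq]
  constructor
  · rintro ⟨hIE, Bs, hBs, hdj⟩
    rw [isBase_restrict_iff hsub] at hBs
    obtain ⟨B₀, hB₀, hB₀Bs⟩ := (Coindep.exists_isBase_subset_compl hBs.indep)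
    have hmax : (M.E \ C) \ Bs ⊆ B₀ := by
      intro x hx
      by_contra hxB₀
      have hxi : M✶.Indep (insert x Bs) := by
        rw [dual_indep_iff_exists' ]
        refine ⟨insert_subset (hx.1.1) (hBs.indep.subset_ground), B₀, hB₀, ?_⟩
        rw [Set.insert_eq, Set.disjoint_union_left]
        exact ⟨Set.disjoint_singleton_left.mpr hxB₀, (subset_diff.mp hB₀Bs).2.symm⟩
      exact (hBs.insert_dep ⟨hx.1, hx.2⟩).not_indep hxi
    have hIB₀ : I ⊆ B₀ := fun x hx => hmax ⟨hIE hx, (hdj.ne_of_mem hx · rfl)⟩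
    refine ⟨hIE, B₀ ∩ C, ?_, hB₀.indep.subset (union_subset hIB₀ inter_subset_left)⟩
    have hBsEq : (M.E \ B₀) ∩ (M.E \ C) = Bs := by
      apply Set.Subset.antisymm
      · intro x hx
        by_contra hxBs
        exact hx.1.2 (hmax ⟨hx.2, hxBs⟩)
      · exact Set.subset_inter (subset_diff.mpr ⟨hBs.indep.subset_ground,
          (subset_diff.mp hB₀Bs).2.symm⟩) hBs.subset
    rw [hB₀.inter_isBasis_iff_compl_inter_isBasis_dual hC, hBsEq]
    exact hBs
  · rintro ⟨hIE, J, hJ, hIJ⟩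
    obtain ⟨B₀, hB₀, hsub'⟩ := hIJ.exists_isBase_superset
    have hJeq : B₀ ∩ C = J :=
      (hJ.eq_of_subset_indep (hB₀.indep.inter_right C)
        (subset_inter (union_subset_iff.mp hsub').2 hJ.subset) inter_subset_right).symm
    have hbasis : M.IsBasis (B₀ ∩ C) C := by rw [hJeq]; exact hJ
    refine ⟨hIE, (M.E \ B₀) ∩ (M.E \ C), ?_, ?_⟩
    · rw [isBase_restrict_iff hsub]
      exact hB₀.compl_inter_isBasis_of_inter_isBasis hbasis
    · exact Disjoint.mono_right inter_subset_left
        (disjoint_sdiff_right.mono_left (union_subset_iff.mp hsub').1)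

lemma mContract_mContract (M : Matroid α) (C D : Set α) :
    mContract (mContract M C) D = mContract M (C ∪ D) := by
  simp only [mContract, mDelete, dual_dual, dual_ground, restrict_ground_eq]
  rw [restrict_restrict_eq _ diff_subset, diff_diff]

lemma mContract_restrict {M : Matroid α} {A B : Set α} (hBA : B ⊆ A) (hA : A ⊆ M.E) :
    mContract (M ↾ A) B = (mContract M B) ↾ (A \ B) := by
  have hB : B ⊆ M.E := hBA.trans hA
  rw [ext_iff_indep]
  refine ⟨rfl, fun I hI => ?_⟩
  rw [mContract_indep_iff (show B ⊆ (M ↾ A).E from hBA), restrict_indep_iff,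
    mContract_indep_iff hB]
  simp only [restrict_ground_eq, restrict_indep_iff, isBasis_restrict_iff hA]
  constructor
  · rintro ⟨hIE, J, ⟨hJ, -⟩, hIJ, -⟩
    exact ⟨⟨hIE.trans (diff_subset_diff_left hA), J, hJ, hIJ⟩, hIE⟩
  · rintro ⟨⟨-, J, hJ, hIJ⟩, hIA⟩
    exact ⟨hIA, J, ⟨hJ, hBA⟩, hIJ, union_subset (hIA.trans diff_subset) (hJ.subset.trans hBA)⟩

open Classical in
/-- coassociativity of the coproduct `Δ(M) = Σ_{A ⊆ E} M|_A ⊗ M/A` on the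
vector space spanned by isomorphism classes of matroids, stated on basis elements:
`(Δ ⊗ id)(Δ(M)) = (id ⊗ Δ)(Δ(M))` in the free module on triples of isomorphism classes. -/
theorem coassoc (M : Matroid α) (hE : M.E.Finite) :
    (∑ A ∈ hE.toFinset.powerset, ∑ B ∈ A.powerset,
      Finsupp.single
        (Quot.mk MatIso ((M ↾ (A : Set α)) ↾ (B : Set α)),
         Quot.mk MatIso (mContract (M ↾ (A : Set α)) (B : Set α)),
         Quot.mk MatIso (mContract M (A : Set α))) (1 : ℚ)) =
    ∑ A ∈ hE.toFinset.powerset, ∑ B ∈ (hE.toFinset \ A).powerset,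
      Finsupp.single
        (Quot.mk MatIso (M ↾ (A : Set α)),
         Quot.mk MatIso ((mContract M (A : Set α)) ↾ (B : Set α)),
         Quot.mk MatIso (mContract (mContract M (A : Set α)) (B : Set α))) (1 : ℚ) := by
  
  classical
  rw [Finset.sum_sigma', Finset.sum_sigma']
  refine Finset.sum_nbij' (fun p => ⟨p.2, p.1 \ p.2⟩) (fun p => ⟨p.1 ∪ p.2, p.1⟩)
    ?_ ?_ ?_ ?_ ?_
  · rintro ⟨A, B⟩ hp
    simp only [Finset.mem_sigma, Finset.mem_powerset] at hp ⊢
    exact ⟨hp.2.trans hp.1, Finset.sdiff_subset_sdiff hp.1 le_rfl⟩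
  · rintro ⟨A, B⟩ hp
    simp only [Finset.mem_sigma, Finset.mem_powerset] at hp ⊢
    exact ⟨Finset.union_subset hp.1 (hp.2.trans Finset.sdiff_subset),
      Finset.subset_union_left⟩
  · rintro ⟨A, B⟩ hp
    simp only [Finset.mem_sigma, Finset.mem_powerset] at hp
    show (⟨B ∪ A \ B, B⟩ : (_ : Finset α) × Finset α) = ⟨A, B⟩
    rw [Finset.union_sdiff_of_subset hp.2]
  · rintro ⟨A, B⟩ hp
    simp only [Finset.mem_sigma, Finset.mem_powerset] at hp
    show (⟨A, (A ∪ B) \ A⟩ : (_ : Finset α) × Finset α) = ⟨A, B⟩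
    rw [Finset.union_sdiff_cancel_left
      (Finset.disjoint_of_subset_left hp.2 Finset.sdiff_disjoint).symm]
  · rintro ⟨A, B⟩ hp
    simp only [Finset.mem_sigma, Finset.mem_powerset] at hp
    have hAE : (A : Set α) ⊆ M.E := by
      simpa [hE.coe_toFinset] using (Finset.coe_subset.mpr hp.1)
    have hBA : (B : Set α) ⊆ (A : Set α) := Finset.coe_subset.mpr hp.2
    have h1 : (M ↾ (A : Set α)) ↾ (B : Set α) = M ↾ (B : Set α) :=
      M.restrict_restrict_eq hBA
    have h2 : mContract (M ↾ (A : Set α)) (B : Set α)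
        = mContract M (B : Set α) ↾ ((A \ B : Finset α) : Set α) := by
      rw [Finset.coe_sdiff]; exact mContract_restrict hBA hAE
    have h3 : mContract M (A : Set α)
        = mContract (mContract M (B : Set α)) ((A \ B : Finset α) : Set α) := by
      rw [Finset.coe_sdiff, mContract_mContract, union_diff_cancel hBA]
    rw [h1, h2, h3]
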